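/- If (x(t), y(t)) is a differentiable solution of the Duffing system ẋ = y, ẏ = x − x³, then the transformed variables x₁(t) = x(t)² − y(t)², y₁(t) = 2 x(t) y(t) satisfy the closed system ẋ₁ = (1/2)(x₁ + r) y₁, ẏ₁ = −x₁² − (1/2) y₁² + r(2 − x₁), where r(t) = x(t)² + y(t)² (note r = √(x₁² + y₁²)). -/

import Mathlib

/-- If `(x,y)` solves the conservative Duffing system, then `x₁ = x² − y²`,
`y₁ = 2xy` satisfy the closed covered system
`ẋ₁ = (1/2)(x₁ + r) y₁`, `ẏ₁ = −x₁² − (1/2) y₁² + r(2 − x₁)` with `r = x² + y²`. -/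
theorem covered_duffing_system (x y : ℝ → ℝ)
    (hx : ∀ t, HasDerivAt x (y t) t)
    (hy : ∀ t, HasDerivAt y (x t - (x t) ^ 3) t) :
    ∀ t,
      HasDerivAt (fun t => (x t) ^ 2 - (y t) ^ 2)
        ((1 / 2) * (((x t) ^ 2 - (y t) ^ 2) + ((x t) ^ 2 + (y t) ^ 2))
          * (2 * x t * y t)) t ∧
      HasDerivAt (fun t => 2 * x t * y t)
        (-((x t) ^ 2 - (y t) ^ 2) ^ 2 - (1 / 2) * (2 * x t * y t) ^ 2
          + ((x t) ^ 2 + (y t) ^ 2) * (2 - ((x t) ^ 2 - (y t) ^ 2))) t ∧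
      (x t) ^ 2 + (y t) ^ 2
        = Real.sqrt (((x t) ^ 2 - (y t) ^ 2) ^ 2 + (2 * x t * y t) ^ 2) := by
  intro t
  have h1 : HasDerivAt (fun t => (x t) ^ 2 - (y t) ^ 2)
      (2 * x t ^ 1 * y t - 2 * y t ^ 1 * (x t - x t ^ 3)) t :=
    ((hx t).pow 2).sub ((hy t).pow 2)
  have h2 : HasDerivAt (fun t => 2 * x t * y t)
      ((2 * y t) * y t + (2 * x t) * (x t - x t ^ 3)) t := by
    have : HasDerivAt (fun t => 2 * x t * y t) (2 * y t * y t + 2 * x t * (x t - x t ^ 3)) t :=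
      (((hx t).const_mul 2).mul (hy t))
    convert this using 1
  refine ⟨h1.congr_deriv (by ring), h2.congr_deriv (by ring), ?_⟩
  rw [show ((x t) ^ 2 - (y t) ^ 2) ^ 2 + (2 * x t * y t) ^ 2
      = ((x t) ^ 2 + (y t) ^ 2) ^ 2 by ring,
    Real.sqrt_sq (by positivity)]
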